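/- E² + Ã₁Ã₂ + Ã₂Ã₁ = a·I_n + b·Ã₁ + b·Ã₂. -/
import Mathlib


open Matrix Kronecker

/-- The block matrix `E` with zero diagonal blocks and all-ones off-diagonal blocks. -/
def Etil (n : ℕ) : Matrix (Fin 1 ⊕ Fin (n - 1)) (Fin 1 ⊕ Fin (n - 1)) ℚ :=
  Matrix.fromBlocks 0 (Matrix.of fun _ _ => 1) (Matrix.of fun _ _ => 1) 0

/-- The block matrix `Ã` with `A` as lower-right block and zeros elsewhere. -/
def Atil {n : ℕ} (A : Matrix (Fin (n - 1)) (Fin (n - 1)) ℚ) :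
    Matrix (Fin 1 ⊕ Fin (n - 1)) (Fin 1 ⊕ Fin (n - 1)) ℚ :=
  Matrix.fromBlocks 0 0 0 A

/-- The permutation matrix of the 4-cycle (1,2,3,4). -/
def xD : Matrix (Fin 4) (Fin 4) ℚ := !![0,1,0,0; 0,0,1,0; 0,0,0,1; 1,0,0,0]

/-- The permutation matrix of (1,2)(3,4). -/
def yD : Matrix (Fin 4) (Fin 4) ℚ := !![0,1,0,0; 1,0,0,0; 0,0,0,1; 0,0,1,0]

/-- `σ_h := I_n ⊗ h`. -/
def sig (n : ℕ) (h : Matrix (Fin 4) (Fin 4) ℚ) :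
    Matrix ((Fin 1 ⊕ Fin (n - 1)) × Fin 4) ((Fin 1 ⊕ Fin (n - 1)) × Fin 4) ℚ :=
  (1 : Matrix (Fin 1 ⊕ Fin (n - 1)) (Fin 1 ⊕ Fin (n - 1)) ℚ) ⊗ₖ h

/-- `μ_g := E ⊗ g + Ã₁ ⊗ (g·y) + Ã₂ ⊗ (g·x²·y)`. -/
def mu {n : ℕ} (A₁ : Matrix (Fin (n - 1)) (Fin (n - 1)) ℚ) (g : Matrix (Fin 4) (Fin 4) ℚ) :
    Matrix ((Fin 1 ⊕ Fin (n - 1)) × Fin 4) ((Fin 1 ⊕ Fin (n - 1)) × Fin 4) ℚ :=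
  Etil n ⊗ₖ g + Atil A₁ ⊗ₖ (g * yD) + Atil A₁ᵀ ⊗ₖ (g * xD ^ 2 * yD)

theorem stmt_3 (n : ℕ) (hn : 4 ≤ n) (a b : ℚ)
    (ha : a = (n : ℚ) - 1) (hb : b = ((n : ℚ) - 2) / 2)
    (A₁ : Matrix (Fin (n - 1)) (Fin (n - 1)) ℚ)
    (h01 : ∀ i j, A₁ i j = 0 ∨ A₁ i j = 1)
    (hdiag : ∀ i, A₁ i i = 0)
    (hns : A₁ ≠ A₁ᵀ)
    (hsum : A₁ + A₁ᵀ = (Matrix.of fun _ _ => (1 : ℚ)) - 1)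
    (hrow : ∀ i, ∑ j, A₁ i j = b)
    (h11 : A₁ * A₁ = ((b - 1) / 2) • A₁ + ((b + 1) / 2) • A₁ᵀ)
    (h22 : A₁ᵀ * A₁ᵀ = ((b + 1) / 2) • A₁ + ((b - 1) / 2) • A₁ᵀ)
    (h12 : A₁ * A₁ᵀ = b • (1 : Matrix (Fin (n - 1)) (Fin (n - 1)) ℚ)
      + ((b - 1) / 2) • A₁ + ((b - 1) / 2) • A₁ᵀ)
    (h21 : A₁ᵀ * A₁ = b • (1 : Matrix (Fin (n - 1)) (Fin (n - 1)) ℚ)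
      + ((b - 1) / 2) • A₁ + ((b - 1) / 2) • A₁ᵀ) :
    Etil n * Etil n + Atil A₁ * Atil A₁ᵀ + Atil A₁ᵀ * Atil A₁ = a • (1 : Matrix (Fin 1 ⊕ Fin (n - 1)) (Fin 1 ⊕ Fin (n - 1)) ℚ) + b • Atil A₁ + b • Atil A₁ᵀ := by
  have hcard : ((n - 1 : ℕ) : ℚ) = (n : ℚ) - 1 := by
    have : 1 ≤ n := by omega
    push_cast [this]; ring
  ext i j
  rcases i with i | i <;> rcases j with j | j
  · simp [Etil, Atil, Matrix.mul_apply, Fintype.sum_sum_type, Matrix.one_apply,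
      Subsingleton.elim i j, hcard, ha]
  · simp [Etil, Atil, Matrix.mul_apply, Fintype.sum_sum_type, Matrix.one_apply]
  · simp [Etil, Atil, Matrix.mul_apply, Fintype.sum_sum_type, Matrix.one_apply]
  · have e12 := congrFun (congrFun h12 i) j
    have e21 := congrFun (congrFun h21 i) j
    have es := congrFun (congrFun hsum i) j
    simp [Matrix.mul_apply, Matrix.one_apply, Matrix.add_apply, Matrix.sub_apply,
      Matrix.smul_apply] at e12 e21 es
    simp [Etil, Atil, Matrix.mul_apply, Fintype.sum_sum_type, Matrix.one_apply]
    by_cases h : i = j <;> simp [h] at es e12 e21 ⊢ <;> linarith
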